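/- Fix d ≥ 3 and define v_n(d) by v_1(d) = 1 and v_n(d) = ((2n-1)!!)^{d-1} − ∑_{k=1}^{n-1} C(n-1,k-1)((2n-2k-1)!!)^{d-1} v_k(d) for n > 1. Then v_n(d) ~ ((2n-1)!!)^{d-1} as n → ∞; more precisely, ((2n-1)!!)^{d-1}(1 − C/n) ≤ v_n(d) ≤ ((2n-1)!!)^{d-1} for some constant C and all sufficiently large n. -/

import Mathlib

open Nat Filter

/-- `(2n-1)!! = 1·3·5⋯(2n-1)`, the product of the first `n` odd positive integers. -/
def oddDF (n : ℕ) : ℕ := ∏ i ∈ Finset.range n, (2 * i + 1)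

lemma oddDF_pos (n : ℕ) : 0 < oddDF n :=
  Finset.prod_pos fun i _ => by omega

lemma key2 (n k : ℕ) (h : 2 * k ≤ n) :
    oddDF k * oddDF (n - k) * n.choose k ≤ oddDF n := by
  have hk : k ≤ n := by omega
  have hsplit : oddDF n = oddDF (n - k) * ∏ j ∈ Finset.range k, (2 * ((n - k) + j) + 1) := by
    have hn : n = (n - k) + k := by omega
    rw [oddDF, oddDF]
    nth_rewrite 1 [hn]
    rw [Finset.prod_range_add]
  rw [hsplit]
  rw [show oddDF k * oddDF (n - k) * n.choose k = oddDF (n - k) * (oddDF k * n.choose k) by ring]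
  apply Nat.mul_le_mul_left
  -- now: oddDF k * n.choose k ≤ ∏ j ∈ range k, (2*((n-k)+j)+1)
  have hfact : 0 < k ! := Nat.factorial_pos k
  apply Nat.le_of_mul_le_mul_right _ hfact
  -- (oddDF k * choose n k) * k! ≤ P * k!
  have h1 : oddDF k * n.choose k * k ! = oddDF k * n.descFactorial k := by
    rw [Nat.descFactorial_eq_factorial_mul_choose]; ring
  rw [h1, Nat.descFactorial_eq_prod_range, oddDF, ← Finset.prod_mul_distrib]
  have h2 : (∏ j ∈ Finset.range k, (2 * ((n - k) + j) + 1)) * k ! =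
      ∏ j ∈ Finset.range k, ((2 * (n - 1 - j) + 1) * (j + 1)) := by
    rw [Finset.prod_mul_distrib, Finset.prod_range_add_one_eq_factorial]
    congr 1
    rw [← Finset.prod_range_reflect]
    apply Finset.prod_congr rfl
    intro j hj
    simp only [Finset.mem_range] at hj
    congr 1
    omega
  rw [h2]
  apply Finset.prod_le_prod'
  intro i hi
  simp only [Finset.mem_range] at hi
  -- (2i+1)*(n-i) ≤ (2*(n-1-i)+1)*(i+1)  with 2i+1 < n
  obtain ⟨m, hm⟩ : ∃ m, n = 2 * i + 2 + m := ⟨n - (2 * i + 2), by omega⟩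
  subst hm
  have e1 : 2 * i + 2 + m - i = i + 2 + m := by omega
  have e2 : 2 * i + 2 + m - 1 - i = i + 1 + m := by omega
  rw [e1, e2]
  nlinarith [Nat.zero_le m, Nat.zero_le i]

lemma key (n k : ℕ) (hk : k ≤ n) :
    oddDF k * oddDF (n - k) * n.choose k ≤ oddDF n := by
  rcases le_or_gt (2 * k) n with h | h
  · exact key2 n k h
  · have h2 : 2 * (n - k) ≤ n := by omega
    have := key2 n (n - k) h2
    rw [Nat.sub_sub_self hk, Nat.choose_symm hk] at this
    calc oddDF k * oddDF (n - k) * n.choose k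
        = oddDF (n - k) * oddDF k * n.choose k := by ring
      _ ≤ oddDF n := this

lemma choose_mono_half (n : ℕ) : ∀ j k : ℕ, j ≤ k → 2 * k ≤ n → n.choose j ≤ n.choose k := by
  intro j k
  induction k with
  | zero => intro hj _; simp [Nat.le_zero.mp hj]
  | succ m ih =>
    intro hj hk
    rcases Nat.lt_or_ge j (m + 1) with hlt | hge
    · have step : n.choose m ≤ n.choose (m + 1) := by
        apply Nat.choose_le_succ_of_lt_half_left
        omega
      exact le_trans (ih (by omega) (by omega)) step
    · have : j = m + 1 := by omega
      simp [this]

lemma choose_between (n j k : ℕ) (hjk : j ≤ k) (hk : k + j ≤ n) :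
    n.choose j ≤ n.choose k := by
  rcases le_or_gt (2 * k) n with h | h
  · exact choose_mono_half n j k hjk h
  · have hkn : k ≤ n := by omega
    rw [← Nat.choose_symm hkn]
    exact choose_mono_half n j (n - k) (by omega) (by omega)

lemma two_mul_choose_two (n : ℕ) : 2 * n.choose 2 = n * (n - 1) := by
  rcases n with _ | m
  · simp
  · rw [Nat.choose_two_right, Nat.add_sub_cancel]
    have h : 2 ∣ (m + 1) * m := by
      rcases Nat.even_or_odd m with h | h
      · exact Dvd.dvd.mul_left h.two_dvd _
      · exact Dvd.dvd.mul_right (h.add_one).two_dvd _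
    exact Nat.mul_div_cancel' h

lemma pascal_le (n k : ℕ) (h1 : 1 ≤ k) (h2 : k ≤ n) :
    (n - 1).choose (k - 1) ≤ n.choose k := by
  obtain ⟨m, rfl⟩ : ∃ m, n = m + 1 := ⟨n - 1, by omega⟩
  obtain ⟨j, rfl⟩ : ∃ j, k = j + 1 := ⟨k - 1, by omega⟩
  simp [Nat.choose_succ_succ]

lemma inv_sum_le_one (n : ℕ) (hn : 2 ≤ n) :
    ∑ k ∈ Finset.Icc 1 (n - 1), ((n.choose k : ℝ))⁻¹ ≤ 1 := by
  have hn0 : (0 : ℝ) < n := by exact_mod_cast (by omega : 0 < n)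
  have hterm : ∀ k ∈ Finset.Icc 1 (n - 1), ((n.choose k : ℝ))⁻¹ ≤ (n : ℝ)⁻¹ := by
    intro k hk
    simp only [Finset.mem_Icc] at hk
    have h1 : n ≤ n.choose k := by
      have := choose_between n 1 k hk.1 (by omega)
      simpa using this
    exact inv_anti₀ hn0 (by exact_mod_cast h1)
  calc ∑ k ∈ Finset.Icc 1 (n - 1), ((n.choose k : ℝ))⁻¹
      ≤ (Finset.Icc 1 (n - 1)).card • (n : ℝ)⁻¹ := Finset.sum_le_card_nsmul _ _ _ hterm
    _ = ((n - 1 : ℕ) : ℝ) * (n : ℝ)⁻¹ := by rw [Nat.card_Icc]; simp [nsmul_eq_mul]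
    _ ≤ 1 := by
        rw [← div_eq_mul_inv]
        apply div_le_one_of_le₀
        · exact_mod_cast Nat.sub_le n 1
        · positivity

lemma inv_sum_le_four (n : ℕ) (hn : 4 ≤ n) :
    ∑ k ∈ Finset.Icc 1 (n - 1), ((n.choose k : ℝ))⁻¹ ≤ 4 / n := by
  have hn0 : (0 : ℝ) < n := by exact_mod_cast (by omega : 0 < n)
  have e1 : Finset.Icc 1 (n - 1) = insert 1 (insert (n - 1) (Finset.Icc 2 (n - 2))) := by
    ext x
    simp only [Finset.mem_insert, Finset.mem_Icc]
    omega
  have h1m : (1 : ℕ) ∉ insert (n - 1) (Finset.Icc 2 (n - 2)) := by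
    simp only [Finset.mem_insert, Finset.mem_Icc]; omega
  have h2m : (n - 1) ∉ Finset.Icc 2 (n - 2) := by
    simp only [Finset.mem_Icc]; omega
  rw [e1, Finset.sum_insert h1m, Finset.sum_insert h2m]
  have hc1 : (n.choose 1 : ℝ) = n := by rw [Nat.choose_one_right]
  have hcn1 : (n.choose (n - 1) : ℝ) = n := by
    have h := Nat.choose_symm (show n - 1 ≤ n by omega)
    rw [show n - (n - 1) = 1 by omega, Nat.choose_one_right] at h
    rw [← h]
  have hmid : ∑ k ∈ Finset.Icc 2 (n - 2), ((n.choose k : ℝ))⁻¹ ≤ 2 / n := by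
    have hp : (0 : ℝ) < (n.choose 2 : ℝ) := by
      exact_mod_cast Nat.choose_pos (by omega : 2 ≤ n)
    have hterm : ∀ k ∈ Finset.Icc 2 (n - 2), ((n.choose k : ℝ))⁻¹ ≤ ((n.choose 2 : ℝ))⁻¹ := by
      intro k hk
      simp only [Finset.mem_Icc] at hk
      have h1 : n.choose 2 ≤ n.choose k := choose_between n 2 k hk.1 (by omega)
      exact inv_anti₀ hp (by exact_mod_cast h1)
    calc ∑ k ∈ Finset.Icc 2 (n - 2), ((n.choose k : ℝ))⁻¹
        ≤ (Finset.Icc 2 (n - 2)).card • ((n.choose 2 : ℝ))⁻¹ :=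
          Finset.sum_le_card_nsmul _ _ _ hterm
      _ = ((n - 3 : ℕ) : ℝ) * ((n.choose 2 : ℝ))⁻¹ := by
          rw [Nat.card_Icc, show n - 2 + 1 - 2 = n - 3 by omega]; simp [nsmul_eq_mul]
      _ ≤ 2 / n := by
          have hc2 : 2 * (n.choose 2 : ℝ) = (n : ℝ) * ((n : ℝ) - 1) := by
            have h := two_mul_choose_two n
            have h' : ((2 * n.choose 2 : ℕ) : ℝ) = ((n * (n - 1) : ℕ) : ℝ) := by
              exact_mod_cast congrArg (fun x : ℕ => (x : ℝ)) h
            push_cast [Nat.cast_sub (show 1 ≤ n by omega)] at h'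
            linarith
          rw [← div_eq_mul_inv, div_le_div_iff₀ hp hn0]
          push_cast [Nat.cast_sub (show 3 ≤ n by omega)]
          nlinarith [hn0]
  have hinv : (n : ℝ)⁻¹ = 1 / (n : ℝ) := inv_eq_one_div _
  rw [hc1, hcn1, hinv]
  have h4 : (4 : ℝ) / n = 1 / n + (1 / n + 2 / n) := by ring
  rw [h4]
  linarith [hmid]

theorem stmt11 (d : ℕ) (hd : 3 ≤ d) (v : ℕ → ℝ) (hv1 : v 1 = 1)
    (hrec : ∀ n : ℕ, 1 < n →
      v n = (oddDF n : ℝ) ^ (d - 1) -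
        ∑ k ∈ Finset.Icc 1 (n - 1),
          ((n - 1).choose (k - 1) : ℝ) * (oddDF (n - k) : ℝ) ^ (d - 1) * v k) :
    Tendsto (fun n : ℕ => v n / (oddDF n : ℝ) ^ (d - 1)) atTop (nhds 1) ∧
      ∃ C : ℝ, ∀ᶠ n : ℕ in atTop,
        (oddDF n : ℝ) ^ (d - 1) * (1 - C / n) ≤ v n ∧
          v n ≤ (oddDF n : ℝ) ^ (d - 1) := by
  have hapos : ∀ n : ℕ, (0 : ℝ) < (oddDF n : ℝ) ^ (d - 1) := by
    intro n
    have : (0 : ℝ) < (oddDF n : ℝ) := by exact_mod_cast oddDF_pos n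
    positivity
  -- per-term bound
  have hterm : ∀ n k : ℕ, 1 ≤ k → k ≤ n - 1 → 2 ≤ n →
      ((n - 1).choose (k - 1) : ℝ) * (oddDF (n - k) : ℝ) ^ (d - 1) * (oddDF k : ℝ) ^ (d - 1)
        ≤ (oddDF n : ℝ) ^ (d - 1) * ((n.choose k : ℝ))⁻¹ := by
    intro n k hk1 hk2 hn2
    have hkn : k ≤ n := by omega
    set c : ℝ := (n.choose k : ℝ) with hc
    have hc1 : (1 : ℝ) ≤ c := by
      rw [hc]
      exact_mod_cast Nat.choose_pos hkn
    have hc0 : (0 : ℝ) < c := by linarith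
    have hbc : ((n - 1).choose (k - 1) : ℝ) ≤ c := by
      rw [hc]
      exact_mod_cast pascal_le n k hk1 hkn
    have hkey : (oddDF k : ℝ) * (oddDF (n - k) : ℝ) * c ≤ (oddDF n : ℝ) := by
      rw [hc]
      exact_mod_cast key n k hkn
    set x : ℝ := (oddDF (n - k) : ℝ) with hx
    set y : ℝ := (oddDF k : ℝ) with hy
    have hx0 : (0 : ℝ) ≤ x := by positivity
    have hy0 : (0 : ℝ) ≤ y := by positivity
    rw [← div_eq_mul_inv, le_div_iff₀ hc0]
    calc ((n - 1).choose (k - 1) : ℝ) * x ^ (d - 1) * y ^ (d - 1) * c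
        ≤ c * x ^ (d - 1) * y ^ (d - 1) * c := by gcongr
      _ = (x ^ (d - 1) * y ^ (d - 1)) * c ^ 2 := by ring
      _ ≤ (x ^ (d - 1) * y ^ (d - 1)) * c ^ (d - 1) := by
          apply mul_le_mul_of_nonneg_left _ (by positivity)
          exact pow_le_pow_right₀ hc1 (by omega)
      _ = ((y * x) * c) ^ (d - 1) := by rw [mul_pow, mul_pow]; ring
      _ ≤ (oddDF n : ℝ) ^ (d - 1) := by
          apply pow_le_pow_left₀ (by positivity)
          exact hkey
  -- one step of the recursion
  have step : ∀ n : ℕ, 2 ≤ n → (∀ k, 1 ≤ k → k < n → 0 ≤ v k ∧ v k ≤ (oddDF k : ℝ) ^ (d - 1)) →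
      (oddDF n : ℝ) ^ (d - 1) * (1 - ∑ k ∈ Finset.Icc 1 (n - 1), ((n.choose k : ℝ))⁻¹) ≤ v n ∧
        v n ≤ (oddDF n : ℝ) ^ (d - 1) := by
    intro n hn hsmall
    rw [hrec n (by omega)]
    have hterms : ∀ k ∈ Finset.Icc 1 (n - 1),
        0 ≤ ((n - 1).choose (k - 1) : ℝ) * (oddDF (n - k) : ℝ) ^ (d - 1) * v k ∧
        ((n - 1).choose (k - 1) : ℝ) * (oddDF (n - k) : ℝ) ^ (d - 1) * v k ≤
          (oddDF n : ℝ) ^ (d - 1) * ((n.choose k : ℝ))⁻¹ := by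
      intro k hk
      simp only [Finset.mem_Icc] at hk
      obtain ⟨hv0, hva⟩ := hsmall k hk.1 (by omega)
      refine ⟨by positivity, ?_⟩
      calc ((n - 1).choose (k - 1) : ℝ) * (oddDF (n - k) : ℝ) ^ (d - 1) * v k
          ≤ ((n - 1).choose (k - 1) : ℝ) * (oddDF (n - k) : ℝ) ^ (d - 1) * (oddDF k : ℝ) ^ (d - 1) := by
            gcongr
        _ ≤ (oddDF n : ℝ) ^ (d - 1) * ((n.choose k : ℝ))⁻¹ := hterm n k hk.1 hk.2 hn
    have hS0 : 0 ≤ ∑ k ∈ Finset.Icc 1 (n - 1),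
        ((n - 1).choose (k - 1) : ℝ) * (oddDF (n - k) : ℝ) ^ (d - 1) * v k :=
      Finset.sum_nonneg fun k hk => (hterms k hk).1
    have hSle : ∑ k ∈ Finset.Icc 1 (n - 1),
        ((n - 1).choose (k - 1) : ℝ) * (oddDF (n - k) : ℝ) ^ (d - 1) * v k ≤
        (oddDF n : ℝ) ^ (d - 1) * ∑ k ∈ Finset.Icc 1 (n - 1), ((n.choose k : ℝ))⁻¹ := by
      rw [Finset.mul_sum]
      exact Finset.sum_le_sum fun k hk => (hterms k hk).2
    constructor
    · have : (oddDF n : ℝ) ^ (d - 1) * (1 - ∑ k ∈ Finset.Icc 1 (n - 1), ((n.choose k : ℝ))⁻¹) =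
        (oddDF n : ℝ) ^ (d - 1) - (oddDF n : ℝ) ^ (d - 1) *
          ∑ k ∈ Finset.Icc 1 (n - 1), ((n.choose k : ℝ))⁻¹ := by ring
      rw [this]
      linarith
    · linarith
  -- main invariant
  have main : ∀ n : ℕ, 1 ≤ n → 0 ≤ v n ∧ v n ≤ (oddDF n : ℝ) ^ (d - 1) := by
    intro n
    induction n using Nat.strong_induction_on with
    | _ n ih =>
      intro hn
      rcases eq_or_lt_of_le hn with h1 | h1
      · rw [← h1]
        constructor
        · rw [hv1]; norm_num
        · rw [hv1]
          have : oddDF 1 = 1 := by simp [oddDF]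
          rw [this]; norm_num
      · obtain ⟨hl, hu⟩ := step n h1 (fun k hk1 hk2 => ih k hk2 hk1)
        refine ⟨?_, hu⟩
        have hI := inv_sum_le_one n h1
        nlinarith [hapos n, hl]
  -- lower bound for n ≥ 4
  have lower : ∀ n : ℕ, 4 ≤ n → (oddDF n : ℝ) ^ (d - 1) * (1 - 4 / n) ≤ v n := by
    intro n hn
    obtain ⟨hl, _⟩ := step n (by omega) (fun k hk1 hk2 => main k hk1)
    have hI := inv_sum_le_four n hn
    nlinarith [hapos n, hl]
  have hub : ∀ᶠ n : ℕ in atTop, v n / (oddDF n : ℝ) ^ (d - 1) ≤ 1 := by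
    filter_upwards [eventually_ge_atTop 1] with n hn
    rw [div_le_one (hapos n)]
    exact (main n hn).2
  have hlb : ∀ᶠ n : ℕ in atTop, 1 - 4 / (n : ℝ) ≤ v n / (oddDF n : ℝ) ^ (d - 1) := by
    filter_upwards [eventually_ge_atTop 4] with n hn
    rw [le_div_iff₀ (hapos n)]
    have := lower n hn
    linarith [this]
  have ht : Tendsto (fun n : ℕ => 1 - 4 / (n : ℝ)) atTop (nhds 1) := by
    have h0 : Tendsto (fun n : ℕ => 4 / (n : ℝ)) atTop (nhds 0) :=
      tendsto_const_nhds.div_atTop tendsto_natCast_atTop_atTop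
    simpa using tendsto_const_nhds.sub h0
  refine ⟨tendsto_of_tendsto_of_tendsto_of_le_of_le' ht tendsto_const_nhds hlb hub, 4, ?_⟩
  filter_upwards [eventually_ge_atTop 4] with n hn
  exact ⟨lower n hn, (main n (by omega)).2⟩
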